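/- arXiv:2111.15527 — 4 statements merged into one kernel-verified Lean document; each statement's English description precedes it below -/
import Mathlib

section
/- Let θ be parameters of NN({m_l}_{l=0}^L), fix 1 ≤ l ≤ L-1 and α ∈ ℝ, and let θ' = T^α_{l,0}(θ) be the one-step null embedding of θ. Then for every input-output pair (x, y), the error vectors satisfy z^[l']_{θ'} = z^[l']_θ for every l' ∈ [L] with l' ≠ l, and z^[l]_{θ'} = [z^[l]_θ; 0] (the old error vector with a zero appended). -/
namespace EmbeddingPrinciple

/-- Parameters of a fully-connected NN: `(θ l).1 i j` is the weight `W^{[l+1]}_{ij}`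
and `(θ l).2 i` is the bias `b^{[l+1]}_i` (the paper's layer `l` corresponds to index `l-1`).
Only the coordinates below the widths are meaningful for a concrete architecture. -/
abbrev NNParams : Type := ℕ → (ℕ → ℕ → ℝ) × (ℕ → ℝ)

/-- Feature vectors `f^{[l]}` (entrywise activation `σ`); `m` is the width function. -/
noncomputable def feat (σ : ℝ → ℝ) (m : ℕ → ℕ) (θ : NNParams) (x : ℕ → ℝ) : ℕ → ℕ → ℝ
  | 0 => x
  | l + 1 => fun i =>
      σ ((∑ j ∈ Finset.range (m l), (θ l).1 i j * feat σ m θ x l j) + (θ l).2 i)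

/-- Pre-activation of layer `l+1`: `W^{[l+1]} f^{[l]} + b^{[l+1]}`. -/
noncomputable def preact (σ : ℝ → ℝ) (m : ℕ → ℕ) (θ : NNParams) (x : ℕ → ℝ) (l i : ℕ) : ℝ :=
  (∑ j ∈ Finset.range (m l), (θ l).1 i j * feat σ m θ x l j) + (θ l).2 i

/-- Output `f_θ` of the `(K+1)`-layer network (the paper's `L` is `K+1`). -/
noncomputable def nnOut (σ : ℝ → ℝ) (m : ℕ → ℕ) (K : ℕ) (θ : NNParams) (x : ℕ → ℝ) :
    ℕ → ℝ := fun i => preact σ m θ x K i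

/-- Feature gradient `g^{[l+1]} = σ'(W^{[l+1]} f^{[l]} + b^{[l+1]})`. -/
noncomputable def gFeat (σ : ℝ → ℝ) (m : ℕ → ℕ) (θ : NNParams) (x : ℕ → ℝ) (l i : ℕ) : ℝ :=
  deriv σ (preact σ m θ x l i)

/-- Output truncated to the valid output coordinates. -/
noncomputable def truncOut (σ : ℝ → ℝ) (m : ℕ → ℕ) (K : ℕ) (θ : NNParams) (x : ℕ → ℝ) :
    ℕ → ℝ := fun i => if i < m (K + 1) then nnOut σ m K θ x i else 0

/-- Empirical risk `R_S(θ) = (1/n) ∑ᵢ ℓ(f_θ(xᵢ), yᵢ)`. -/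
noncomputable def risk (σ : ℝ → ℝ) (m : ℕ → ℕ) (K : ℕ)
    (loss : (ℕ → ℝ) → (ℕ → ℝ) → ℝ) {n : ℕ} (X Y : Fin n → ℕ → ℝ) (θ : NNParams) : ℝ :=
  (n : ℝ)⁻¹ * ∑ a : Fin n, loss (truncOut σ m K θ (X a)) (Y a)

/-- Update a single weight coordinate. -/
def updW (θ : NNParams) (l i j : ℕ) (t : ℝ) : NNParams := fun l' =>
  if l' = l then ((fun i' j' => if i' = i ∧ j' = j then t else (θ l).1 i' j'), (θ l).2)
  else θ l'

/-- Update a single bias coordinate. -/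
def updB (θ : NNParams) (l i : ℕ) (t : ℝ) : NNParams := fun l' =>
  if l' = l then ((θ l).1, fun i' => if i' = i then t else (θ l).2 i') else θ l'

/-- `θ` is a critical point of `R` : all partial derivatives with respect to the valid
coordinates of the `(K+1)`-layer architecture with width function `m` vanish. -/
def IsCritical (R : NNParams → ℝ) (m : ℕ → ℕ) (K : ℕ) (θ : NNParams) : Prop :=
  (∀ l, l ≤ K → ∀ i, i < m (l + 1) → ∀ j, j < m l →
      deriv (fun t => R (updW θ l i j t)) ((θ l).1 i j) = 0) ∧
  (∀ l, l ≤ K → ∀ i, i < m (l + 1) →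
      deriv (fun t => R (updB θ l i t)) ((θ l).2 i) = 0)

/-- Equality of two parameter tuples on all valid coordinates of the architecture. -/
def ParamEqOn (m : ℕ → ℕ) (K : ℕ) (θ₁ θ₂ : NNParams) : Prop :=
  ∀ l, l ≤ K → ∀ i, i < m (l + 1) →
    (∀ j, j < m l → (θ₁ l).1 i j = (θ₂ l).1 i j) ∧ (θ₁ l).2 i = (θ₂ l).2 i

/-- Error vectors by reversed index: `errRev … t = z^{[K+1-t]}`, where `z^{[K+1]} = ∇ℓ`
(represented by the function `dloss`) and `z^{[l]} = (W^{[l+1]})ᵀ (z^{[l+1]} ∘ g^{[l+1]})`. -/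
noncomputable def errRev (σ : ℝ → ℝ) (m : ℕ → ℕ) (K : ℕ) (θ : NNParams)
    (dloss : (ℕ → ℝ) → (ℕ → ℝ) → ℕ → ℝ) (x y : ℕ → ℝ) : ℕ → ℕ → ℝ
  | 0 => dloss (truncOut σ m K θ x) y
  | t + 1 => fun j =>
      ∑ i ∈ Finset.range (m (K + 1 - t)),
        (θ (K - t)).1 i j *
          (errRev σ m K θ dloss x y t i * (if t = 0 then 1 else gFeat σ m θ x (K - t) i))

/-- `e^{[l]} = z^{[l]} ∘ g^{[l]}` (with `g^{[K+1]} = 1`). -/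
noncomputable def errE (σ : ℝ → ℝ) (m : ℕ → ℕ) (K : ℕ) (θ : NNParams)
    (dloss : (ℕ → ℝ) → (ℕ → ℝ) → ℕ → ℝ) (x y : ℕ → ℝ) (l i : ℕ) : ℝ :=
  errRev σ m K θ dloss x y (K + 1 - l) i *
    (if l = K + 1 then 1 else gFeat σ m θ x (l - 1) i)

/-- Differentiability of the loss in its first argument (on each finite-dimensional
coordinate block). -/
def LossDiff (loss : (ℕ → ℝ) → (ℕ → ℝ) → ℝ) : Prop :=
  ∀ (y : ℕ → ℝ) (d : ℕ),
    Differentiable ℝ (fun u : Fin d → ℝ => loss (fun i => if h : i < d then u ⟨i, h⟩ else 0) y)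

/-- Widths after adding one neuron in the paper's layer `p+1`. -/
def widen (m : ℕ → ℕ) (p : ℕ) : ℕ → ℕ := fun l => if l = p + 1 then m (p + 1) + 1 else m l

/-- One-step null embedding `T^α_{l,0}` at the paper's layer `l = p+1`. -/
def nullEmb (m : ℕ → ℕ) (p : ℕ) (α : ℝ) (θ : NNParams) : NNParams := fun l =>
  if l = p then
    ((fun i j => if i = m (p + 1) then 0 else (θ p).1 i j),
     (fun i => if i = m (p + 1) then α else (θ p).2 i))
  else if l = p + 1 then
    ((fun i j => if j = m (p + 1) then 0 else (θ (p + 1)).1 i j), (θ (p + 1)).2)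
  else θ l

/-- One-step splitting embedding `T^α_{l,s}` at the paper's layer `l = p+1`,
splitting neuron `s`. -/
def splitEmb (m : ℕ → ℕ) (p s : ℕ) (α : ℝ) (θ : NNParams) : NNParams := fun l =>
  if l = p then
    ((fun i j => if i = m (p + 1) then (θ p).1 s j else (θ p).1 i j),
     (fun i => if i = m (p + 1) then (θ p).2 s else (θ p).2 i))
  else if l = p + 1 then
    ((fun i j =>
        if j = s then (1 - α) * (θ (p + 1)).1 i s
        else if j = m (p + 1) then α * (θ (p + 1)).1 i s
        else (θ (p + 1)).1 i j),
     (θ (p + 1)).2)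
  else θ l

section Aux

variable (σ : ℝ → ℝ) (m : ℕ → ℕ) (p : ℕ) (α : ℝ) (θ : NNParams) (x : ℕ → ℝ)

lemma widen_ne {l : ℕ} (h : l ≠ p + 1) : widen m p l = m l := if_neg h

lemma nullEmb_ne {l : ℕ} (h1 : l ≠ p) (h2 : l ≠ p + 1) : nullEmb m p α θ l = θ l := by
  simp [nullEmb, h1, h2]

lemma feat_le : ∀ l, l ≤ p → ∀ j,
    feat σ (widen m p) (nullEmb m p α θ) x l j = feat σ m θ x l j := by
  intro l
  induction l with
  | zero => intro _ j; rfl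
  | succ l ih =>
    intro hl j
    simp only [feat]
    rw [widen_ne m p (l := l) (by omega), nullEmb_ne m p α θ (l := l) (by omega) (by omega)]
    congr 2
    exact Finset.sum_congr rfl fun j' _ => by rw [ih (by omega) j']

lemma feat_p1 {j : ℕ} (hj : j ≠ m (p + 1)) :
    feat σ (widen m p) (nullEmb m p α θ) x (p + 1) j = feat σ m θ x (p + 1) j := by
  simp only [feat]
  rw [widen_ne m p (l := p) (by omega)]
  have h1 : ∀ j', (nullEmb m p α θ p).1 j j' = (θ p).1 j j' := by
    intro j'; simp [nullEmb, hj]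
  have h2 : (nullEmb m p α θ p).2 j = (θ p).2 j := by simp [nullEmb, hj]
  rw [h2]
  congr 2
  exact Finset.sum_congr rfl fun j' _ => by
    rw [h1 j', feat_le σ m p α θ x p le_rfl j']

lemma feat_ge : ∀ l, p + 2 ≤ l → ∀ i,
    feat σ (widen m p) (nullEmb m p α θ) x l i = feat σ m θ x l i := by
  intro l
  induction l with
  | zero => omega
  | succ l ih =>
    intro hl i
    simp only [feat]
    by_cases hlp : l = p + 1
    · subst hlp
      have hw : widen m p (p + 1) = m (p + 1) + 1 := by simp [widen]
      have hθ2 : (nullEmb m p α θ (p + 1)).2 i = (θ (p + 1)).2 i := by simp [nullEmb]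
      rw [hw, hθ2, Finset.sum_range_succ]
      have hz : (nullEmb m p α θ (p + 1)).1 i (m (p + 1)) = 0 := by simp [nullEmb]
      rw [hz, zero_mul, add_zero]
      congr 2
      refine Finset.sum_congr rfl fun j hj => ?_
      have hjne : j ≠ m (p + 1) := by
        have := Finset.mem_range.mp hj; omega
      have hw1 : (nullEmb m p α θ (p + 1)).1 i j = (θ (p + 1)).1 i j := by
        simp [nullEmb, hjne]
      rw [hw1, feat_p1 σ m p α θ x hjne]
    · have hl2 : p + 2 ≤ l := by omega
      rw [widen_ne m p (l := l) (by omega), nullEmb_ne m p α θ (l := l) (by omega) (by omega)]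
      congr 2
      exact Finset.sum_congr rfl fun j _ => by rw [ih hl2 j]

lemma preact_eq : ∀ l i, (l = p → i ≠ m (p + 1)) →
    preact σ (widen m p) (nullEmb m p α θ) x l i = preact σ m θ x l i := by
  intro l i hcond
  unfold preact
  by_cases hlp : l = p + 1
  · subst hlp
    have hw : widen m p (p + 1) = m (p + 1) + 1 := by simp [widen]
    have hθ2 : (nullEmb m p α θ (p + 1)).2 i = (θ (p + 1)).2 i := by simp [nullEmb]
    rw [hw, hθ2, Finset.sum_range_succ]
    have hz : (nullEmb m p α θ (p + 1)).1 i (m (p + 1)) = 0 := by simp [nullEmb]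
    rw [hz, zero_mul, add_zero]
    congr 1
    refine Finset.sum_congr rfl fun j hj => ?_
    have hjne : j ≠ m (p + 1) := by
      have := Finset.mem_range.mp hj; omega
    have hw1 : (nullEmb m p α θ (p + 1)).1 i j = (θ (p + 1)).1 i j := by
      simp [nullEmb, hjne]
    rw [hw1, feat_p1 σ m p α θ x hjne]
  · by_cases hle : l ≤ p
    · rw [widen_ne m p (l := l) (by omega)]
      have h1 : ∀ j', (nullEmb m p α θ l).1 i j' = (θ l).1 i j' := by
        intro j'
        by_cases hlp' : l = p
        · subst hlp'; simp [nullEmb, hcond rfl]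
        · rw [nullEmb_ne m p α θ hlp' hlp]
      have h2 : (nullEmb m p α θ l).2 i = (θ l).2 i := by
        by_cases hlp' : l = p
        · subst hlp'; simp [nullEmb, hcond rfl]
        · rw [nullEmb_ne m p α θ hlp' hlp]
      rw [h2]
      congr 1
      exact Finset.sum_congr rfl fun j _ => by
        rw [h1 j, feat_le σ m p α θ x l hle j]
    · have hl2 : p + 2 ≤ l := by omega
      rw [widen_ne m p (l := l) (by omega), nullEmb_ne m p α θ (l := l) (by omega) (by omega)]
      congr 1
      exact Finset.sum_congr rfl fun j _ => by rw [feat_ge σ m p α θ x l hl2 j]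

lemma gFeat_eq (l i : ℕ) (h : l = p → i ≠ m (p + 1)) :
    gFeat σ (widen m p) (nullEmb m p α θ) x l i = gFeat σ m θ x l i := by
  unfold gFeat; rw [preact_eq σ m p α θ x l i h]

lemma truncOut_eq (K : ℕ) (hpK : p < K) :
    truncOut σ (widen m p) K (nullEmb m p α θ) x = truncOut σ m K θ x := by
  funext i
  unfold truncOut nnOut
  rw [widen_ne m p (l := K + 1) (by omega), preact_eq σ m p α θ x K i (by omega)]

lemma err_eq (K : ℕ) (hpK : p < K)
    (dloss : (ℕ → ℝ) → (ℕ → ℝ) → ℕ → ℝ) (y : ℕ → ℝ) :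
    ∀ t, t ≤ K → ∀ j, (t = K - p → j ≠ m (p + 1)) →
      errRev σ (widen m p) K (nullEmb m p α θ) dloss x y t j =
        errRev σ m K θ dloss x y t j := by
  intro t
  induction t with
  | zero =>
    intro _ j _
    simp only [errRev]
    rw [truncOut_eq σ m p α θ x K hpK]
  | succ t ih =>
    intro ht j hj
    simp only [errRev]
    rcases lt_trichotomy (t + 1) (K - p) with h | h | h
    · rw [widen_ne m p (l := K + 1 - t) (by omega),
        nullEmb_ne m p α θ (l := K - t) (by omega) (by omega)]
      refine Finset.sum_congr rfl fun i _ => ?_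
      rw [ih (by omega) i (by omega)]
      by_cases ht0 : t = 0
      · simp [ht0]
      · simp only [if_neg ht0]
        rw [gFeat_eq σ m p α θ x (K - t) i (by omega)]
    · have hjne : j ≠ m (p + 1) := hj h
      have hKt : K - t = p + 1 := by omega
      rw [widen_ne m p (l := K + 1 - t) (by omega)]
      refine Finset.sum_congr rfl fun i _ => ?_
      have hw : (nullEmb m p α θ (K - t)).1 i j = (θ (K - t)).1 i j := by
        rw [hKt]; simp [nullEmb, hjne]
      rw [hw, ih (by omega) i (by omega)]
      by_cases ht0 : t = 0
      · simp [ht0]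
      · simp only [if_neg ht0]
        rw [gFeat_eq σ m p α θ x (K - t) i (by omega)]
    · by_cases htk : t = K - p
      · have hKt : K - t = p := by omega
        have hK1t : K + 1 - t = p + 1 := by omega
        have ht0 : t ≠ 0 := by omega
        have hw1 : widen m p (K + 1 - t) = m (p + 1) + 1 := by
          rw [hK1t]; simp [widen]
        rw [hw1, hK1t, Finset.sum_range_succ]
        have hz : (nullEmb m p α θ (K - t)).1 (m (p + 1)) j = 0 := by
          rw [hKt]; simp [nullEmb]
        rw [hz, zero_mul, add_zero]
        refine Finset.sum_congr rfl fun i hi => ?_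
        have hine : i ≠ m (p + 1) := by
          have := Finset.mem_range.mp hi; omega
        have hw2 : (nullEmb m p α θ (K - t)).1 i j = (θ (K - t)).1 i j := by
          rw [hKt]; simp [nullEmb, hine]
        rw [hw2, ih (by omega) i (fun _ => hine)]
        simp only [if_neg ht0]
        rw [gFeat_eq σ m p α θ x (K - t) i (fun _ => hine)]
      · rw [widen_ne m p (l := K + 1 - t) (by omega),
          nullEmb_ne m p α θ (l := K - t) (by omega) (by omega)]
        refine Finset.sum_congr rfl fun i _ => ?_
        rw [ih (by omega) i (by omega)]
        by_cases ht0 : t = 0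
        · simp [ht0]
        · simp only [if_neg ht0]
          rw [gFeat_eq σ m p α θ x (K - t) i (by omega)]

end Aux

/-- error vectors under the one-step null embedding.
`errRev … (K+1-l')` is the paper's `z^{[l']}`; `dloss` represents `∇ℓ`. -/
theorem one_step_null_embedding_error_vectors
    (K : ℕ) (hK : 1 ≤ K) (m : ℕ → ℕ) (σ : ℝ → ℝ) (hσ : Differentiable ℝ σ)
    (loss : (ℕ → ℝ) → (ℕ → ℝ) → ℝ) (hloss : LossDiff loss)
    (dloss : (ℕ → ℝ) → (ℕ → ℝ) → ℕ → ℝ)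
    (hdl : ∀ (u y : ℕ → ℝ) (i : ℕ),
        HasDerivAt (fun t => loss (Function.update u i t) y) (dloss u y i) (u i))
    (p : ℕ) (hp : p < K) (α : ℝ) (θ : NNParams) (x y : ℕ → ℝ) :
    -- for every layer `l' ∈ [L]`, `l' ≠ p+1`, the error vectors agree
    (∀ l', 1 ≤ l' → l' ≤ K + 1 → l' ≠ p + 1 → ∀ j,
        errRev σ (widen m p) K (nullEmb m p α θ) dloss x y (K + 1 - l') j =
          errRev σ m K θ dloss x y (K + 1 - l') j) ∧
    -- at layer `p+1` the old error vector is kept and a zero entry is appended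
    (∀ j, j < m (p + 1) →
        errRev σ (widen m p) K (nullEmb m p α θ) dloss x y (K - p) j =
          errRev σ m K θ dloss x y (K - p) j) ∧
    errRev σ (widen m p) K (nullEmb m p α θ) dloss x y (K - p) (m (p + 1)) = 0 := by
  refine ⟨?_, ?_, ?_⟩
  · intro l' h1 h2 h3 j
    exact err_eq σ m p α θ x K hp dloss y (K + 1 - l') (by omega) j (by omega)
  · intro j hjlt
    exact err_eq σ m p α θ x K hp dloss y (K - p) (by omega) j (fun _ => by omega)
  · have hs : K - p = (K - p - 1) + 1 := by omega
    rw [hs]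
    simp only [errRev]
    apply Finset.sum_eq_zero
    intro i _
    have h1 : K - (K - p - 1) = p + 1 := by omega
    have hz : (nullEmb m p α θ (K - (K - p - 1))).1 i (m (p + 1)) = 0 := by
      rw [h1]; simp [nullEmb]
    rw [hz, zero_mul]

end EmbeddingPrinciple
end

section
/- Let θ be parameters of NN({m_l}_{l=0}^L), fix 1 ≤ l ≤ L-1, s ∈ [m_l], α ∈ ℝ, and let θ' = T^α_{l,s}(θ) be the one-step splitting embedding of θ. Then for every input x ∈ ℝ^d: (i) f^[l']_{θ'}(x) = f^[l']_θ(x) for every layer l' ∈ [L] with l' ≠ l, and f^[l]_{θ'}(x) = [f^[l]_θ(x); (f^[l]_θ(x))_s] (the old feature vector with its s-th entry duplicated as a new last entry); in particular the output functions coincide, f_{θ'}(x) = f_θ(x); (ii) the feature gradients satisfy g^[l']_{θ'}(x) = g^[l']_θ(x) for l' ≠ l, l' ∈ [L-1], and g^[l]_{θ'}(x) = [g^[l]_θ(x); (g^[l]_θ(x))_s]. -/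
namespace EmbeddingPrinciple

/-- feature vectors and feature gradients under the one-step splitting
embedding. -/
theorem one_step_splitting_embedding_features
    (K : ℕ) (hK : 1 ≤ K) (m : ℕ → ℕ) (σ : ℝ → ℝ) (hσ : Differentiable ℝ σ)
    (p : ℕ) (hp : p < K) (s : ℕ) (hs : s < m (p + 1)) (α : ℝ)
    (θ : NNParams) (x : ℕ → ℝ) :
    -- (i) feature vectors of every layer `l' ∈ [L-1]` other than `p+1` agree
    (∀ l', 1 ≤ l' → l' ≤ K → l' ≠ p + 1 →
        ∀ i, feat σ (widen m p) (splitEmb m p s α θ) x l' i = feat σ m θ x l' i) ∧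
    -- at layer `p+1` the old feature vector is kept and its `s`-th entry is duplicated
    (∀ i, i < m (p + 1) →
        feat σ (widen m p) (splitEmb m p s α θ) x (p + 1) i = feat σ m θ x (p + 1) i) ∧
    feat σ (widen m p) (splitEmb m p s α θ) x (p + 1) (m (p + 1)) = feat σ m θ x (p + 1) s ∧
    -- in particular the output functions coincide
    (∀ i, nnOut σ (widen m p) K (splitEmb m p s α θ) x i = nnOut σ m K θ x i) ∧
    -- (ii) feature gradients: `gFeat … q` is the paper's `g^{[q+1]}`, `q+1 ∈ [L-1]`
    (∀ q, q < K → q ≠ p →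
        ∀ i, gFeat σ (widen m p) (splitEmb m p s α θ) x q i = gFeat σ m θ x q i) ∧
    (∀ i, i < m (p + 1) →
        gFeat σ (widen m p) (splitEmb m p s α θ) x p i = gFeat σ m θ x p i) ∧
    gFeat σ (widen m p) (splitEmb m p s α θ) x p (m (p + 1)) = gFeat σ m θ x p s := by
  have feat_succ : ∀ (σ : ℝ → ℝ) (m : ℕ → ℕ) (θ : NNParams) (x : ℕ → ℝ) (l i : ℕ),
      feat σ m θ x (l + 1) i = σ (preact σ m θ x l i) := fun _ _ _ _ _ _ => rfl
  set θ' := splitEmb m p s α θ with hθ'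
  set m' := widen m p with hm'
  have hsne : s ≠ m (p + 1) := Nat.ne_of_lt hs
  have hmother : ∀ l, l ≠ p + 1 → m' l = m l := by
    intro l hl; simp [hm', widen, hl]
  have hθother : ∀ l, l ≠ p → l ≠ p + 1 → θ' l = θ l := by
    intro l h1 h2; simp [hθ', splitEmb, h1, h2]
  have hW' : ∀ i j, (θ' p).1 i j
      = if i = m (p + 1) then (θ p).1 s j else (θ p).1 i j := by
    intro i j; simp [hθ', splitEmb]
  have hb' : ∀ i, (θ' p).2 i
      = if i = m (p + 1) then (θ p).2 s else (θ p).2 i := by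
    intro i; simp [hθ', splitEmb]
  have hW1 : ∀ i j, (θ' (p + 1)).1 i j
      = if j = s then (1 - α) * (θ (p + 1)).1 i s
        else if j = m (p + 1) then α * (θ (p + 1)).1 i s
        else (θ (p + 1)).1 i j := by
    intro i j; simp [hθ', splitEmb]
  have hb1 : (θ' (p + 1)).2 = (θ (p + 1)).2 := by simp [hθ', splitEmb]
  -- preactivation at layer p, assuming features at level p agree
  have haveA : ∀ i, (∀ j, feat σ m' θ' x p j = feat σ m θ x p j) →
      preact σ m' θ' x p i = preact σ m θ x p (if i = m (p + 1) then s else i) := by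
    intro i hf
    unfold preact
    rw [hmother p (by omega), hb' i]
    rcases eq_or_ne i (m (p + 1)) with h | h
    · rw [if_pos h, if_pos h]
      congr 1
      refine Finset.sum_congr rfl fun j _ => ?_
      rw [hW' i j, if_pos h, hf j]
    · rw [if_neg h, if_neg h]
      congr 1
      refine Finset.sum_congr rfl fun j _ => ?_
      rw [hW' i j, if_neg h, hf j]
  -- preactivation at layer p+1 (the splitting computation)
  have haveB : ∀ i,
      (∀ j, feat σ m' θ' x (p + 1) j
        = feat σ m θ x (p + 1) (if j = m (p + 1) then s else j)) →
      preact σ m' θ' x (p + 1) i = preact σ m θ x (p + 1) i := by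
    intro i hf
    unfold preact
    rw [hb1]
    have hm'l : m' (p + 1) = m (p + 1) + 1 := by simp [hm', widen]
    rw [hm'l, Finset.sum_range_succ]
    have hlast : (θ' (p + 1)).1 i (m (p + 1)) * feat σ m' θ' x (p + 1) (m (p + 1))
        = α * (θ (p + 1)).1 i s * feat σ m θ x (p + 1) s := by
      rw [hW1, hf]
      simp [hsne.symm]
    rw [hlast]
    have hmain : ∑ j ∈ Finset.range (m (p + 1)),
        (θ' (p + 1)).1 i j * feat σ m' θ' x (p + 1) j
        = ∑ j ∈ Finset.range (m (p + 1)),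
            ((θ (p + 1)).1 i j * feat σ m θ x (p + 1) j
              + (if j = s then -(α * (θ (p + 1)).1 i s * feat σ m θ x (p + 1) s) else 0)) := by
      refine Finset.sum_congr rfl fun j hj => ?_
      have hjm : j ≠ m (p + 1) := Nat.ne_of_lt (Finset.mem_range.mp hj)
      rw [hW1, hf]
      rcases eq_or_ne j s with rfl | hjs
      · simp [hjm]; ring
      · simp only [if_neg hjs, if_neg hjm, add_zero]
    rw [hmain, Finset.sum_add_distrib,
      Finset.sum_ite_eq' (Finset.range (m (p + 1))) s, if_pos (Finset.mem_range.mpr hs)]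
    ring
  -- preactivation at other layers
  have haveC : ∀ q, q ≠ p → q ≠ p + 1 → ∀ i,
      (∀ j, feat σ m' θ' x q j = feat σ m θ x q j) →
      preact σ m' θ' x q i = preact σ m θ x q i := by
    intro q hq hq1 i hf
    unfold preact
    rw [hmother q hq1, hθother q hq hq1]
    congr 1
    exact Finset.sum_congr rfl fun j _ => by rw [hf j]
  -- all feature vectors
  have key : ∀ l i, feat σ m' θ' x l i
      = feat σ m θ x l (if l = p + 1 ∧ i = m (p + 1) then s else i) := by
    intro l
    induction l with
    | zero =>
      intro i
      have h0 : ¬ ((0 : ℕ) = p + 1 ∧ i = m (p + 1)) := by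
        rintro ⟨h, -⟩; omega
      rw [if_neg h0]
      rfl
    | succ l ih =>
      intro i
      by_cases hlp : l = p
      · rw [hlp] at ih ⊢
        have hf : ∀ j, feat σ m' θ' x p j = feat σ m θ x p j := by
          intro j
          have hc : ¬ (p = p + 1 ∧ j = m (p + 1)) := by rintro ⟨h, -⟩; omega
          simpa [hc] using ih j
        rw [feat_succ, feat_succ, haveA i hf]
        rcases eq_or_ne i (m (p + 1)) with h | h
        · rw [if_pos h, if_pos ⟨rfl, h⟩]
        · rw [if_neg h, if_neg (by rintro ⟨-, h2⟩; exact h h2)]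
      · by_cases hlp1 : l = p + 1
        · rw [hlp1] at ih ⊢
          have hf : ∀ j, feat σ m' θ' x (p + 1) j
              = feat σ m θ x (p + 1) (if j = m (p + 1) then s else j) := by
            intro j; simpa using ih j
          rw [feat_succ, feat_succ, haveB i hf,
            if_neg (by rintro ⟨h, -⟩; omega : ¬ (p + 1 + 1 = p + 1 ∧ i = m (p + 1)))]
        · have hf : ∀ j, feat σ m' θ' x l j = feat σ m θ x l j := by
            intro j
            have hc : ¬ (l = p + 1 ∧ j = m (p + 1)) := by rintro ⟨h, -⟩; exact hlp1 h
            simpa [hc] using ih j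
          rw [feat_succ, feat_succ, haveC l hlp hlp1 i hf,
            if_neg (by rintro ⟨h, -⟩; exact hlp (by omega) : ¬ (l + 1 = p + 1 ∧ i = m (p + 1)))]
  have hfeatP : ∀ j, feat σ m' θ' x p j = feat σ m θ x p j := by
    intro j
    have hc : ¬ (p = p + 1 ∧ j = m (p + 1)) := by rintro ⟨h, -⟩; omega
    simpa [hc] using key p j
  have hfeatP1 : ∀ j, feat σ m' θ' x (p + 1) j
      = feat σ m θ x (p + 1) (if j = m (p + 1) then s else j) := by
    intro j; simpa using key (p + 1) j
  have hpre : ∀ q, q ≠ p → ∀ i, preact σ m' θ' x q i = preact σ m θ x q i := by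
    intro q hq i
    by_cases hq1 : q = p + 1
    · rw [hq1]; exact haveB i hfeatP1
    · refine haveC q hq hq1 i fun j => ?_
      have hc : ¬ (q = p + 1 ∧ j = m (p + 1)) := by rintro ⟨h, -⟩; exact hq1 h
      simpa [hc] using key q j
  refine ⟨?_, ?_, ?_, ?_, ?_, ?_, ?_⟩
  · intro l' h1 h2 h3 i
    have hc : ¬ (l' = p + 1 ∧ i = m (p + 1)) := by rintro ⟨h, -⟩; exact h3 h
    simpa [hc] using key l' i
  · intro i hi
    have := hfeatP1 i
    rwa [if_neg (Nat.ne_of_lt hi)] at this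
  · have := hfeatP1 (m (p + 1))
    rwa [if_pos rfl] at this
  · intro i
    exact hpre K (by omega) i
  · intro q hq hqp i
    unfold gFeat
    rw [hpre q hqp i]
  · intro i hi
    unfold gFeat
    rw [haveA i hfeatP, if_neg (Nat.ne_of_lt hi)]
  · unfold gFeat
    rw [haveA (m (p + 1)) hfeatP, if_pos rfl]

end EmbeddingPrinciple
end

section
/- Let θ be parameters of NN({m_l}_{l=0}^L), fix 1 ≤ l ≤ L-1, s ∈ [m_l], α ∈ ℝ, and let θ' = T^α_{l,s}(θ) be the one-step splitting embedding of θ. Then for every input-output pair (x, y), the error vectors satisfy z^[l']_{θ'} = z^[l']_θ for every l' ∈ [L] with l' ≠ l, and z^[l]_{θ'} = [(z^[l]_θ)_{1:s-1}, (1-α)(z^[l]_θ)_s, (z^[l]_θ)_{s+1:m_l}, α(z^[l]_θ)_s] (the s-th entry is multiplied by (1-α) and a new last entry equal to α times the old s-th entry is appended). -/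
namespace EmbeddingPrinciple

lemma key_sum (n s : ℕ) (hs : s < n) (α : ℝ) (G : ℕ → ℝ) :
    (∑ j ∈ Finset.range (n + 1),
      (if j = s then (1 - α) * G s else if j = n then α * G s else G j))
      = ∑ j ∈ Finset.range n, G j := by
  rw [Finset.sum_range_succ]
  have h1 : ∀ j ∈ Finset.range n,
      (if j = s then (1 - α) * G s else if j = n then α * G s else G j)
        = G j - (if j = s then α * G s else 0) := by
    intro j hj
    rcases eq_or_ne j s with rfl | h
    · simp; ring
    · simp [h, (Finset.mem_range.mp hj).ne]
  rw [Finset.sum_congr rfl h1, Finset.sum_sub_distrib,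
    Finset.sum_ite_eq' (Finset.range n) s fun _ => α * G s]
  have hn : ¬ (n = s) := by omega
  simp [Finset.mem_range.mpr hs, hn]

lemma preact_split_of (σ : ℝ → ℝ) (m : ℕ → ℕ) (p s : ℕ) (α : ℝ) (θ : NNParams)
    (x : ℕ → ℝ) (hs : s < m (p + 1)) (l : ℕ)
    (hfe : ∀ j, feat σ (widen m p) (splitEmb m p s α θ) x l j
        = feat σ m θ x l (if l = p + 1 ∧ j = m (p + 1) then s else j)) :
    ∀ i, preact σ (widen m p) (splitEmb m p s α θ) x l i
        = preact σ m θ x l (if l = p ∧ i = m (p + 1) then s else i) := by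
  intro i
  rcases eq_or_ne l p with hlp | hlp
  · rw [hlp] at hfe ⊢
    have hw : widen m p p = m p := if_neg (by omega)
    have hfe' : ∀ j, feat σ (widen m p) (splitEmb m p s α θ) x p j = feat σ m θ x p j :=
      fun j => by rw [hfe j, if_neg (fun h => absurd h.1 (by omega))]
    unfold preact
    rw [hw]
    by_cases him : i = m (p + 1)
    · rw [if_pos ⟨rfl, him⟩]
      congr 1
      · apply Finset.sum_congr rfl
        intro j _
        rw [hfe' j]
        simp [splitEmb, him]
      · simp [splitEmb, him]
    · rw [if_neg (fun h => him h.2)]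
      congr 1
      · apply Finset.sum_congr rfl
        intro j _
        rw [hfe' j]
        simp [splitEmb, him]
      · simp [splitEmb, him]
  · rcases eq_or_ne l (p + 1) with hlp1 | hlp1
    · rw [hlp1] at hfe ⊢
      have hw : widen m p (p + 1) = m (p + 1) + 1 := if_pos rfl
      rw [if_neg (fun h => absurd h.1 (by omega))]
      unfold preact
      rw [hw]
      have hsum : ∀ j ∈ Finset.range (m (p + 1) + 1),
          (splitEmb m p s α θ (p + 1)).1 i j *
              feat σ (widen m p) (splitEmb m p s α θ) x (p + 1) j
          = (if j = s then (1 - α) * ((θ (p + 1)).1 i s * feat σ m θ x (p + 1) s)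
             else if j = m (p + 1) then
               α * ((θ (p + 1)).1 i s * feat σ m θ x (p + 1) s)
             else (θ (p + 1)).1 i j * feat σ m θ x (p + 1) j) := by
        intro j _
        rw [hfe j]
        rcases eq_or_ne j s with rfl | hjs
        · rw [if_neg (fun h => absurd h.2 (by omega))]
          simp [splitEmb, Nat.succ_ne_self]
          ring
        · rcases eq_or_ne j (m (p + 1)) with rfl | hjm
          · rw [if_pos ⟨rfl, rfl⟩]
            simp [splitEmb, hjs, Nat.succ_ne_self]
            ring
          · rw [if_neg (fun h => hjm h.2)]
            simp [splitEmb, hjs, hjm, Nat.succ_ne_self]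
      congr 1
      · rw [Finset.sum_congr rfl hsum]
        exact key_sum (m (p + 1)) s hs α
          (fun j => (θ (p + 1)).1 i j * feat σ m θ x (p + 1) j)
      · simp [splitEmb, Nat.succ_ne_self]
    · have hw : widen m p l = m l := if_neg hlp1
      have hθ : splitEmb m p s α θ l = θ l := by simp [splitEmb, hlp, hlp1]
      have hfe' : ∀ j, feat σ (widen m p) (splitEmb m p s α θ) x l j = feat σ m θ x l j :=
        fun j => by rw [hfe j, if_neg (fun h => hlp1 h.1)]
      rw [if_neg (fun h => hlp h.1)]
      unfold preact
      rw [hw, hθ]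
      congr 1
      apply Finset.sum_congr rfl
      intro j _
      rw [hfe' j]

lemma main_split (σ : ℝ → ℝ) (m : ℕ → ℕ) (p s : ℕ) (α : ℝ) (θ : NNParams)
    (x : ℕ → ℝ) (hs : s < m (p + 1)) :
    ∀ l, (∀ i, feat σ (widen m p) (splitEmb m p s α θ) x l i
        = feat σ m θ x l (if l = p + 1 ∧ i = m (p + 1) then s else i)) ∧
      (∀ i, preact σ (widen m p) (splitEmb m p s α θ) x l i
        = preact σ m θ x l (if l = p ∧ i = m (p + 1) then s else i)) := by
  intro l
  induction l with
  | zero =>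
    have hf : ∀ i, feat σ (widen m p) (splitEmb m p s α θ) x 0 i
        = feat σ m θ x 0 (if 0 = p + 1 ∧ i = m (p + 1) then s else i) := by
      intro i
      rw [if_neg (fun h => absurd h.1 (by omega))]
      rfl
    exact ⟨hf, preact_split_of σ m p s α θ x hs 0 hf⟩
  | succ l ih =>
    have hf : ∀ i, feat σ (widen m p) (splitEmb m p s α θ) x (l + 1) i
        = feat σ m θ x (l + 1) (if l + 1 = p + 1 ∧ i = m (p + 1) then s else i) := by
      intro i
      have hcond : (if l + 1 = p + 1 ∧ i = m (p + 1) then s else i)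
          = (if l = p ∧ i = m (p + 1) then s else i) := by
        simp only [add_left_inj]
      rw [hcond]
      exact congrArg σ (ih.2 i)
    exact ⟨hf, preact_split_of σ m p s α θ x hs (l + 1) hf⟩

lemma gFeat_split (σ : ℝ → ℝ) (m : ℕ → ℕ) (p s : ℕ) (α : ℝ) (θ : NNParams)
    (x : ℕ → ℝ) (hs : s < m (p + 1)) (l i : ℕ) :
    gFeat σ (widen m p) (splitEmb m p s α θ) x l i
      = gFeat σ m θ x l (if l = p ∧ i = m (p + 1) then s else i) :=
  congrArg (deriv σ) ((main_split σ m p s α θ x hs l).2 i)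

lemma truncOut_split (σ : ℝ → ℝ) (m : ℕ → ℕ) (K p s : ℕ) (α : ℝ) (θ : NNParams)
    (x : ℕ → ℝ) (hp : p < K) (hs : s < m (p + 1)) :
    truncOut σ (widen m p) K (splitEmb m p s α θ) x = truncOut σ m K θ x := by
  funext i
  unfold truncOut nnOut
  have hw : widen m p (K + 1) = m (K + 1) := if_neg (by omega)
  have hidx : preact σ (widen m p) (splitEmb m p s α θ) x K i = preact σ m θ x K i := by
    rw [(main_split σ m p s α θ x hs K).2 i,
      if_neg (fun h : K = p ∧ i = m (p + 1) => absurd h.1 (by omega))]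
  rw [hw, hidx]

lemma errRev_split_high (σ : ℝ → ℝ) (m : ℕ → ℕ) (K p s : ℕ) (α : ℝ) (θ : NNParams)
    (dloss : (ℕ → ℝ) → (ℕ → ℝ) → ℕ → ℝ) (x y : ℕ → ℝ)
    (hp : p < K) (hs : s < m (p + 1)) :
    ∀ t, t < K - p → ∀ j,
      errRev σ (widen m p) K (splitEmb m p s α θ) dloss x y t j
        = errRev σ m K θ dloss x y t j := by
  intro t
  induction t with
  | zero =>
    intro _ j
    simp only [errRev, truncOut_split σ m K p s α θ x hp hs]
  | succ t ih =>
    intro ht j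
    have h1 : K + 1 - t ≠ p + 1 := by omega
    have h2 : K - t ≠ p := by omega
    have h3 : K - t ≠ p + 1 := by omega
    simp only [errRev]
    have hw : widen m p (K + 1 - t) = m (K + 1 - t) := if_neg h1
    have hθ : splitEmb m p s α θ (K - t) = θ (K - t) := by simp [splitEmb, h2, h3]
    rw [hw, hθ]
    apply Finset.sum_congr rfl
    intro i _
    rw [ih (by omega) i]
    rcases eq_or_ne t 0 with rfl | ht0
    · simp
    · simp only [if_neg ht0]
      rw [gFeat_split σ m p s α θ x hs (K - t) i,
        if_neg (fun h : K - t = p ∧ i = m (p + 1) => h2 h.1)]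

lemma errRev_split_layer (σ : ℝ → ℝ) (m : ℕ → ℕ) (K p s : ℕ) (α : ℝ) (θ : NNParams)
    (dloss : (ℕ → ℝ) → (ℕ → ℝ) → ℕ → ℝ) (x y : ℕ → ℝ)
    (hp : p < K) (hs : s < m (p + 1)) :
    (∀ j, j ≠ s → j ≠ m (p + 1) →
        errRev σ (widen m p) K (splitEmb m p s α θ) dloss x y (K - p) j
          = errRev σ m K θ dloss x y (K - p) j) ∧
    errRev σ (widen m p) K (splitEmb m p s α θ) dloss x y (K - p) s
      = (1 - α) * errRev σ m K θ dloss x y (K - p) s ∧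
    errRev σ (widen m p) K (splitEmb m p s α θ) dloss x y (K - p) (m (p + 1))
      = α * errRev σ m K θ dloss x y (K - p) s := by
  obtain ⟨t₀, ht₀⟩ : ∃ t₀, K - p = t₀ + 1 := ⟨K - p - 1, by omega⟩
  have hKt : K - t₀ = p + 1 := by omega
  have hKt1 : K + 1 - t₀ = p + 2 := by omega
  have hw : widen m p (p + 2) = m (p + 2) := if_neg (by omega)
  have hE : ∀ j, errRev σ (widen m p) K (splitEmb m p s α θ) dloss x y (K - p) j
      = ∑ i ∈ Finset.range (m (p + 2)),
          (splitEmb m p s α θ (p + 1)).1 i j *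
            (errRev σ m K θ dloss x y t₀ i *
              (if t₀ = 0 then 1 else gFeat σ m θ x (p + 1) i)) := by
    intro j
    rw [ht₀]
    simp only [errRev]
    rw [hKt, hKt1, hw]
    apply Finset.sum_congr rfl
    intro i _
    rw [errRev_split_high σ m K p s α θ dloss x y hp hs t₀ (by omega) i]
    rcases eq_or_ne t₀ 0 with rfl | h0
    · simp
    · simp only [if_neg h0]
      rw [gFeat_split σ m p s α θ x hs (p + 1) i,
        if_neg (fun h : p + 1 = p ∧ i = m (p + 1) => absurd h.1 (by omega))]
  have hE2 : ∀ j, errRev σ m K θ dloss x y (K - p) j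
      = ∑ i ∈ Finset.range (m (p + 2)),
          (θ (p + 1)).1 i j *
            (errRev σ m K θ dloss x y t₀ i *
              (if t₀ = 0 then 1 else gFeat σ m θ x (p + 1) i)) := by
    intro j
    rw [ht₀]
    simp only [errRev]
    rw [hKt, hKt1]
  refine ⟨fun j hjs hjm => ?_, ?_, ?_⟩
  · rw [hE, hE2]
    apply Finset.sum_congr rfl
    intro i _
    simp [splitEmb, hjs, hjm, Nat.succ_ne_self]
  · rw [hE, hE2, Finset.mul_sum]
    apply Finset.sum_congr rfl
    intro i _
    simp [splitEmb, Nat.succ_ne_self]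
    ring
  · rw [hE, hE2, Finset.mul_sum]
    apply Finset.sum_congr rfl
    intro i _
    have hms : ¬ (m (p + 1) = s) := by omega
    simp [splitEmb, hms, Nat.succ_ne_self]
    ring

lemma errRev_split_low (σ : ℝ → ℝ) (m : ℕ → ℕ) (K p s : ℕ) (α : ℝ) (θ : NNParams)
    (dloss : (ℕ → ℝ) → (ℕ → ℝ) → ℕ → ℝ) (x y : ℕ → ℝ)
    (hp : p < K) (hs : s < m (p + 1)) :
    ∀ t, K - p < t → t ≤ K → ∀ j,
      errRev σ (widen m p) K (splitEmb m p s α θ) dloss x y t j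
        = errRev σ m K θ dloss x y t j := by
  intro t
  induction t with
  | zero => intro ht _ _; exact absurd ht (by omega)
  | succ t ih =>
    intro ht htK j
    rcases eq_or_ne t (K - p) with heq | hne
    · have h1 : K - t = p := by omega
      have h2 : K + 1 - t = p + 1 := by omega
      have h0 : t ≠ 0 := by omega
      simp only [errRev, if_neg h0]
      rw [h1, h2]
      have hw : widen m p (p + 1) = m (p + 1) + 1 := if_pos rfl
      rw [hw]
      have hG : ∀ i ∈ Finset.range (m (p + 1) + 1),
          (splitEmb m p s α θ p).1 i j *
            (errRev σ (widen m p) K (splitEmb m p s α θ) dloss x y t i *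
              gFeat σ (widen m p) (splitEmb m p s α θ) x p i)
          = (if i = s then
              (1 - α) * ((θ p).1 s j *
                (errRev σ m K θ dloss x y t s * gFeat σ m θ x p s))
            else if i = m (p + 1) then
              α * ((θ p).1 s j *
                (errRev σ m K θ dloss x y t s * gFeat σ m θ x p s))
            else (θ p).1 i j *
              (errRev σ m K θ dloss x y t i * gFeat σ m θ x p i)) := by
        intro i _
        have hg : gFeat σ (widen m p) (splitEmb m p s α θ) x p i
            = gFeat σ m θ x p (if p = p ∧ i = m (p + 1) then s else i) :=
          gFeat_split σ m p s α θ x hs p i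
        rcases eq_or_ne i (m (p + 1)) with him0 | him
        · rw [hg, him0, if_pos (⟨rfl, rfl⟩ : p = p ∧ m (p + 1) = m (p + 1)),
            if_neg (by omega : ¬ (m (p + 1) = s)), if_pos rfl, heq,
            (errRev_split_layer σ m K p s α θ dloss x y hp hs).2.2]
          simp [splitEmb]
          ring
        · have hgi : gFeat σ (widen m p) (splitEmb m p s α θ) x p i
              = gFeat σ m θ x p i := by
            rw [hg, if_neg (fun h => him h.2)]
          rcases eq_or_ne i s with his0 | his
          · rw [hgi, his0, if_pos rfl]
            rw [heq, (errRev_split_layer σ m K p s α θ dloss x y hp hs).2.1]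
            simp [splitEmb, him]
            ring
          · rw [if_neg his, if_neg him]
            rw [hgi, heq,
              (errRev_split_layer σ m K p s α θ dloss x y hp hs).1 i his him]
            simp [splitEmb, him]
      rw [Finset.sum_congr rfl hG]
      exact key_sum (m (p + 1)) s hs α
        (fun i => (θ p).1 i j * (errRev σ m K θ dloss x y t i * gFeat σ m θ x p i))
    · have h1 : K + 1 - t ≠ p + 1 := by omega
      have h2 : K - t ≠ p := by omega
      have h3 : K - t ≠ p + 1 := by omega
      have h0 : t ≠ 0 := by omega
      simp only [errRev, if_neg h0]
      have hw : widen m p (K + 1 - t) = m (K + 1 - t) := if_neg h1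
      have hθ : splitEmb m p s α θ (K - t) = θ (K - t) := by simp [splitEmb, h2, h3]
      rw [hw, hθ]
      apply Finset.sum_congr rfl
      intro i _
      rw [ih (by omega) (by omega) i,
        gFeat_split σ m p s α θ x hs (K - t) i,
        if_neg (fun h : K - t = p ∧ i = m (p + 1) => h2 h.1)]

/-- error vectors under the one-step splitting embedding.
`errRev … (K+1-l')` is the paper's `z^{[l']}`; `dloss` represents `∇ℓ`. -/
theorem one_step_splitting_embedding_error_vectors
    (K : ℕ) (hK : 1 ≤ K) (m : ℕ → ℕ) (σ : ℝ → ℝ) (hσ : Differentiable ℝ σ)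
    (loss : (ℕ → ℝ) → (ℕ → ℝ) → ℝ) (hloss : LossDiff loss)
    (dloss : (ℕ → ℝ) → (ℕ → ℝ) → ℕ → ℝ)
    (hdl : ∀ (u y : ℕ → ℝ) (i : ℕ),
        HasDerivAt (fun t => loss (Function.update u i t) y) (dloss u y i) (u i))
    (p : ℕ) (hp : p < K) (s : ℕ) (hs : s < m (p + 1)) (α : ℝ)
    (θ : NNParams) (x y : ℕ → ℝ) :
    -- for every layer `l' ∈ [L]`, `l' ≠ p+1`, the error vectors agree
    (∀ l', 1 ≤ l' → l' ≤ K + 1 → l' ≠ p + 1 → ∀ j,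
        errRev σ (widen m p) K (splitEmb m p s α θ) dloss x y (K + 1 - l') j =
          errRev σ m K θ dloss x y (K + 1 - l') j) ∧
    -- at layer `p+1`: entries other than `s` are kept, the `s`-th entry is multiplied
    -- by `(1-α)`, and `α` times the old `s`-th entry is appended
    (∀ j, j < m (p + 1) → j ≠ s →
        errRev σ (widen m p) K (splitEmb m p s α θ) dloss x y (K - p) j =
          errRev σ m K θ dloss x y (K - p) j) ∧
    errRev σ (widen m p) K (splitEmb m p s α θ) dloss x y (K - p) s =
      (1 - α) * errRev σ m K θ dloss x y (K - p) s ∧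
    errRev σ (widen m p) K (splitEmb m p s α θ) dloss x y (K - p) (m (p + 1)) =
      α * errRev σ m K θ dloss x y (K - p) s := by
  refine ⟨fun l' h1 h2 h3 j => ?_, fun j hj hjs => ?_, ?_, ?_⟩
  · rcases (by omega : K + 1 - l' < K - p ∨ K - p < K + 1 - l') with h | h
    · exact errRev_split_high σ m K p s α θ dloss x y hp hs (K + 1 - l') h j
    · exact errRev_split_low σ m K p s α θ dloss x y hp hs (K + 1 - l') h (by omega) j
  · exact (errRev_split_layer σ m K p s α θ dloss x y hp hs).1 j hjs (by omega)
  · exact (errRev_split_layer σ m K p s α θ dloss x y hp hs).2.1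
  · exact (errRev_split_layer σ m K p s α θ dloss x y hp hs).2.2

end EmbeddingPrinciple
end

section
/- (Embedding Principle.) Given NN({m_l}_{l=0}^L) and any K-neuron wider NN({m'_l}_{l=0}^L) (i.e., m'_0 = m_0, m'_L = m_L, m'_l ≥ m_l for all l ∈ [L-1], and K = Σ_{l=1}^{L-1}(m'_l − m_l)), there exists a map T from the narrow parameter space to the wide parameter space, obtained as a composition of K one-step null or one-step splitting embeddings, such that for every data S, loss ℓ and activation σ (each differentiable) and every critical point θ^c of the narrow network's empirical risk, T(θ^c) is a critical point of the wider network's empirical risk and the output functions coincide: f_{T(θ^c)}(x) = f_{θ^c}(x) for all x ∈ ℝ^d. -/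
namespace EmbeddingPrinciple

/-- A one-step embedding step: layer index `p` (the paper's layer `p+1`),
`none` for a null embedding / `some s` for splitting neuron `s`, and the
free parameter `α`. -/
abbrev EmbStep : Type := ℕ × Option ℕ × ℝ

/-- The one-step embedding determined by a step. -/
def stepEmb (m : ℕ → ℕ) (st : EmbStep) (θ : NNParams) : NNParams :=
  match st.2.1 with
  | none => nullEmb m st.1 st.2.2 θ
  | some s => splitEmb m st.1 s st.2.2 θ

/-- Width function after performing a sequence of one-step embeddings. -/
def multiWidth (m : ℕ → ℕ) : List EmbStep → (ℕ → ℕ)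
  | [] => m
  | st :: rest => multiWidth (widen m st.1) rest

/-- The multi-step composition embedding of a sequence of one-step embeddings. -/
def multiEmb (m : ℕ → ℕ) : List EmbStep → NNParams → NNParams
  | [], θ => θ
  | st :: rest, θ => multiEmb (widen m st.1) rest (stepEmb m st θ)

/-- Validity of a sequence of steps: each step acts on a layer `p+1 ∈ [L-1]` and,
for a splitting step, splits an existing neuron of the current width. -/
def ValidSteps (K : ℕ) (m : ℕ → ℕ) : List EmbStep → Prop
  | [] => True
  | st :: rest => st.1 < K ∧ (∀ s, st.2.1 = some s → s < m (st.1 + 1)) ∧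
      ValidSteps K (widen m st.1) rest

lemma feat_succ (σ : ℝ → ℝ) (m : ℕ → ℕ) (θ : NNParams) (x : ℕ → ℝ) (l i : ℕ) :
    feat σ m θ x (l + 1) i = σ (preact σ m θ x l i) := rfl

lemma feat_zero (σ : ℝ → ℝ) (m : ℕ → ℕ) (θ : NNParams) (x : ℕ → ℝ) (j : ℕ) :
    feat σ m θ x 0 j = x j := rfl

lemma preact_key (σ : ℝ → ℝ) (K : ℕ) (m : ℕ → ℕ) (p : ℕ) (hp : p < K)
    (η' η : NNParams) (x : ℕ → ℝ)
    (Hw : ∀ l, l ≤ K → ∀ i, i < m (l+1) → ∀ j, j < m l → (η' l).1 i j = (η l).1 i j)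
    (Hb : ∀ l, l ≤ K → l ≠ p+1 → ∀ i, i < m (l+1) → (η' l).2 i = (η l).2 i)
    (Hb' : ∀ i, i < m (p+2) → (η (p+1)).2 i
        = (η' (p+1)).2 i + (η' (p+1)).1 i (m (p+1)) * feat σ (widen m p) η' x (p+1) (m (p+1))) :
    ∀ l, l ≤ K → ∀ i, i < m (l+1) → preact σ (widen m p) η' x l i = preact σ m η x l i := by
  intro l
  induction l with
  | zero =>
    intro hl i hi
    unfold preact
    have hm0 : widen m p 0 = m 0 := if_neg (by omega)
    rw [hm0, Hb 0 hl (by omega) i hi]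
    congr 1
    apply Finset.sum_congr rfl
    intro j hj
    rw [Hw 0 hl i hi j (Finset.mem_range.mp hj)]
    rfl
  | succ l ih =>
    intro hl i hi
    have hlK : l ≤ K := Nat.le_of_succ_le hl
    have hfeat : ∀ j, j < m (l+1) →
        feat σ (widen m p) η' x (l+1) j = feat σ m η x (l+1) j := by
      intro j hj
      rw [feat_succ, feat_succ, ih hlK j hj]
    by_cases hcase : l + 1 = p + 1
    · have hl' : l = p := by omega
      subst hl'
      unfold preact
      have hm : widen m l (l+1) = m (l+1) + 1 := if_pos rfl
      rw [hm, Finset.sum_range_succ, Hb' i hi]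
      have hsum : ∑ j ∈ Finset.range (m (l+1)), (η' (l+1)).1 i j * feat σ (widen m l) η' x (l+1) j
          = ∑ j ∈ Finset.range (m (l+1)), (η (l+1)).1 i j * feat σ m η x (l+1) j := by
        apply Finset.sum_congr rfl
        intro j hj
        rw [Hw (l+1) hl i hi j (Finset.mem_range.mp hj), hfeat j (Finset.mem_range.mp hj)]
      rw [hsum]; ring
    · unfold preact
      have hm : widen m p (l+1) = m (l+1) := if_neg hcase
      rw [hm, Hb (l+1) hl hcase i hi]
      congr 1
      apply Finset.sum_congr rfl
      intro j hj
      rw [Hw (l+1) hl i hi j (Finset.mem_range.mp hj), hfeat j (Finset.mem_range.mp hj)]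


lemma truncOut_key (σ : ℝ → ℝ) (K : ℕ) (m : ℕ → ℕ) (p : ℕ) (hp : p < K)
    (η' η : NNParams) (x : ℕ → ℝ)
    (h : ∀ l, l ≤ K → ∀ i, i < m (l+1) → preact σ (widen m p) η' x l i = preact σ m η x l i) :
    truncOut σ (widen m p) K η' x = truncOut σ m K η x := by
  funext i
  unfold truncOut nnOut
  have hmK : widen m p (K+1) = m (K+1) := if_neg (by omega)
  rw [hmK]
  split_ifs with hi
  · exact h K le_rfl i hi
  · rfl

lemma risk_key (σ : ℝ → ℝ) (K : ℕ) (m : ℕ → ℕ) (p : ℕ) (hp : p < K)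
    (loss : (ℕ → ℝ) → (ℕ → ℝ) → ℝ) {n : ℕ} (X Y : Fin n → ℕ → ℝ) (η' η : NNParams)
    (Hw : ∀ l, l ≤ K → ∀ i, i < m (l+1) → ∀ j, j < m l → (η' l).1 i j = (η l).1 i j)
    (Hb : ∀ l, l ≤ K → l ≠ p+1 → ∀ i, i < m (l+1) → (η' l).2 i = (η l).2 i)
    (Hb' : ∀ (x : ℕ → ℝ) i, i < m (p+2) → (η (p+1)).2 i
        = (η' (p+1)).2 i + (η' (p+1)).1 i (m (p+1)) * feat σ (widen m p) η' x (p+1) (m (p+1))) :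
    risk σ (widen m p) K loss X Y η' = risk σ m K loss X Y η := by
  unfold risk
  congr 1
  apply Finset.sum_congr rfl
  intro a _
  rw [truncOut_key σ K m p hp η' η (X a) (preact_key σ K m p hp η' η (X a) Hw Hb (Hb' (X a)))]

/- coordinate helper lemmas -/
lemma updW_ne (θ : NNParams) (l i j : ℕ) (t : ℝ) (l' : ℕ) (h : l' ≠ l) :
    updW θ l i j t l' = θ l' := by simp [updW, h]

lemma updW_fst (θ : NNParams) (l i j : ℕ) (t : ℝ) (i' j' : ℕ) :
    (updW θ l i j t l).1 i' j' = if i' = i ∧ j' = j then t else (θ l).1 i' j' := by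
  simp [updW]

lemma updW_snd (θ : NNParams) (l i j : ℕ) (t : ℝ) :
    (updW θ l i j t l).2 = (θ l).2 := by simp [updW]

lemma updB_ne (θ : NNParams) (l i : ℕ) (t : ℝ) (l' : ℕ) (h : l' ≠ l) :
    updB θ l i t l' = θ l' := by simp [updB, h]

lemma updB_fst (θ : NNParams) (l i : ℕ) (t : ℝ) :
    (updB θ l i t l).1 = (θ l).1 := by simp [updB]

lemma updB_snd (θ : NNParams) (l i : ℕ) (t : ℝ) (i' : ℕ) :
    (updB θ l i t l).2 i' = if i' = i then t else (θ l).2 i' := by simp [updB]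

lemma nullEmb_w_eq (m : ℕ → ℕ) (p : ℕ) (α : ℝ) (θ : NNParams) (l i j : ℕ)
    (h1 : l = p → i ≠ m (p+1)) (h2 : l = p+1 → j ≠ m (p+1)) :
    ((nullEmb m p α θ) l).1 i j = (θ l).1 i j := by
  unfold nullEmb
  split_ifs with hp1 hp2
  · rw [hp1]; exact if_neg (h1 hp1)
  · rw [hp2]; exact if_neg (h2 hp2)
  · rfl

lemma nullEmb_b_eq (m : ℕ → ℕ) (p : ℕ) (α : ℝ) (θ : NNParams) (l i : ℕ)
    (h1 : l = p → i ≠ m (p+1)) :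
    ((nullEmb m p α θ) l).2 i = (θ l).2 i := by
  unfold nullEmb
  split_ifs with hp1 hp2
  · rw [hp1]; exact if_neg (h1 hp1)
  · rw [hp2]
  · rfl

lemma nullEmb_col (m : ℕ → ℕ) (p : ℕ) (α : ℝ) (θ : NNParams) (i : ℕ) :
    ((nullEmb m p α θ) (p+1)).1 i (m (p+1)) = 0 := by
  unfold nullEmb
  rw [if_neg (by omega : ¬ p + 1 = p), if_pos rfl]
  exact if_pos rfl

lemma nullEmb_row (m : ℕ → ℕ) (p : ℕ) (α : ℝ) (θ : NNParams) (j : ℕ) :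
    ((nullEmb m p α θ) p).1 (m (p+1)) j = 0 := by
  unfold nullEmb
  rw [if_pos rfl]
  exact if_pos rfl

lemma nullEmb_bq (m : ℕ → ℕ) (p : ℕ) (α : ℝ) (θ : NNParams) :
    ((nullEmb m p α θ) p).2 (m (p+1)) = α := by
  unfold nullEmb
  rw [if_pos rfl]
  exact if_pos rfl

lemma feat_new (σ : ℝ → ℝ) (m : ℕ → ℕ) (p : ℕ) (η' : NNParams) (x : ℕ → ℝ)
    (hrow : ∀ j, (η' p).1 (m (p+1)) j = 0) (hb : (η' p).2 (m (p+1)) = 0) :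
    feat σ (widen m p) η' x (p+1) (m (p+1)) = σ 0 := by
  rw [feat_succ]
  congr 1
  unfold preact
  rw [hb]
  rw [Finset.sum_eq_zero (fun j _ => by rw [hrow j, zero_mul])]
  norm_num


lemma deriv_comp_mul_zero (h : ℝ → ℝ) (c : ℝ) :
    deriv (fun t => h (c * t)) 0 = c * deriv h 0 := by
  rcases eq_or_ne c 0 with rfl | hc
  · simp
  · by_cases hd : DifferentiableAt ℝ h 0
    · have h1 : HasDerivAt (fun t : ℝ => c * t) c 0 := by
        simpa using (hasDerivAt_id (0:ℝ)).const_mul c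
      have h2 : HasDerivAt h (deriv h 0) ((fun t : ℝ => c * t) 0) := by
        simpa using hd.hasDerivAt
      have h3 := (h2.comp 0 h1).deriv
      have heq : (fun t => h (c * t)) = h ∘ (fun t : ℝ => c * t) := rfl
      rw [heq, h3]; ring
    · have hnd : ¬ DifferentiableAt ℝ (fun t => h (c * t)) 0 := by
        intro H
        apply hd
        have h1 : DifferentiableAt ℝ (fun s : ℝ => c⁻¹ * s) 0 :=
          (differentiable_id.const_mul c⁻¹).differentiableAt
        have h2 : DifferentiableAt ℝ ((fun t => h (c * t)) ∘ (fun s : ℝ => c⁻¹ * s)) 0 :=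
          DifferentiableAt.comp 0 (by simpa using H) h1
        have h4 : (fun t => h (c * t)) ∘ (fun s : ℝ => c⁻¹ * s) = h := by
          funext s; simp [Function.comp, mul_inv_cancel_left₀ hc]
        rwa [h4] at h2
      rw [deriv_zero_of_not_differentiableAt hnd,
        deriv_zero_of_not_differentiableAt hd, mul_zero]

lemma step_main (σ : ℝ → ℝ) (K : ℕ) (m : ℕ → ℕ) (p : ℕ) (hp : p < K)
    (loss : (ℕ → ℝ) → (ℕ → ℝ) → ℝ) {n : ℕ} (X Y : Fin n → ℕ → ℝ) (θ : NNParams)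
    (hc : IsCritical (risk σ m K loss X Y) m K θ) :
    IsCritical (risk σ (widen m p) K loss X Y) (widen m p) K (nullEmb m p 0 θ) ∧
    ∀ x, truncOut σ (widen m p) K (nullEmb m p 0 θ) x = truncOut σ m K θ x := by
  have HwB : ∀ l, l ≤ K → ∀ i, i < m (l+1) → ∀ j, j < m l →
      ((nullEmb m p 0 θ) l).1 i j = (θ l).1 i j := by
    intro l hl i hi j hj
    exact nullEmb_w_eq m p 0 θ l i j (fun h => by subst h; omega) (fun h => by subst h; omega)
  have HbB : ∀ l, l ≤ K → ∀ i, i < m (l+1) → ((nullEmb m p 0 θ) l).2 i = (θ l).2 i := by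
    intro l hl i hi
    exact nullEmb_b_eq m p 0 θ l i (fun h => by subst h; omega)
  constructor
  · constructor
    · -- weight coordinates
      intro l hl i hi j hj
      by_cases hC : l = p + 1 ∧ j = m (p+1)
      · -- Case C : new outgoing weight
        obtain ⟨rfl, rfl⟩ : l = p + 1 ∧ j = m (p+1) := hC
        have hi' : i < m (p+2) := by
          have hh : widen m p (p+1+1) = m (p+2) := if_neg (by omega)
          rwa [hh] at hi
        have hfun : ∀ t, risk σ (widen m p) K loss X Y
              (updW (nullEmb m p 0 θ) (p+1) i (m (p+1)) t)
            = risk σ m K loss X Y (updB θ (p+1) i ((θ (p+1)).2 i + σ 0 * t)) := by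
          intro t
          apply risk_key σ K m p hp loss X Y
          · intro l' hl' i' hi' j' hj'
            by_cases h : l' = p + 1
            · subst h
              rw [updW_fst, if_neg (by rintro ⟨_, rfl⟩; omega), updB_fst]
              exact HwB (p+1) hl' i' hi' j' hj'
            · rw [updW_ne _ _ _ _ _ _ h, updB_ne _ _ _ _ _ h]
              exact HwB l' hl' i' hi' j' hj'
          · intro l' hl' hne i' hi'
            rw [updW_ne _ _ _ _ _ _ hne, updB_ne _ _ _ _ _ hne]
            exact HbB l' hl' i' hi'
          · intro x i' hi''
            have hfeat : feat σ (widen m p)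
                (updW (nullEmb m p 0 θ) (p+1) i (m (p+1)) t) x (p+1) (m (p+1)) = σ 0 := by
              apply feat_new
              · intro j'
                rw [updW_ne _ _ _ _ _ _ (by omega : p ≠ p + 1)]
                exact nullEmb_row m p 0 θ j'
              · rw [updW_ne _ _ _ _ _ _ (by omega : p ≠ p + 1)]
                exact nullEmb_bq m p 0 θ
            rw [hfeat, updB_snd, updW_snd, updW_fst]
            by_cases h : i' = i
            · subst h
              rw [if_pos rfl, if_pos ⟨rfl, rfl⟩, HbB (p+1) (by omega) i' hi'']
              ring
            · rw [if_neg h, if_neg (by rintro ⟨rfl, _⟩; exact h rfl),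
                HbB (p+1) (by omega) i' hi'', nullEmb_col m p 0 θ i']
              ring
        have hpt : ((nullEmb m p 0 θ) (p+1)).1 i (m (p+1)) = 0 := nullEmb_col m p 0 θ i
        rw [funext hfun, hpt]
        have h1 := deriv_comp_mul_zero
          (fun s => risk σ m K loss X Y (updB θ (p+1) i ((θ (p+1)).2 i + s))) (σ 0)
        rw [h1]
        have h2 := deriv_comp_const_add
          (fun s => risk σ m K loss X Y (updB θ (p+1) i s)) ((θ (p+1)).2 i) 0
        rw [h2, add_zero, hc.2 (p+1) (by omega) i hi']
        ring
      · by_cases hB : l = p ∧ i = m (p+1)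
        · -- Case B : new incoming weight
          obtain ⟨h1, h2⟩ := hB
          subst h1   -- replaces p by l
          subst h2   -- replaces i by m (l+1)
          have hfun : ∀ t, risk σ (widen m l) K loss X Y
                (updW (nullEmb m l 0 θ) l (m (l+1)) j t)
              = risk σ m K loss X Y θ := by
            intro t
            apply risk_key σ K m l hp loss X Y
            · intro l' hl' i' hi' j' hj'
              by_cases h : l' = l
              · subst h
                rw [updW_fst, if_neg (by rintro ⟨rfl, _⟩; omega)]
                exact HwB l' hl' i' hi' j' hj'
              · rw [updW_ne _ _ _ _ _ _ h]
                exact HwB l' hl' i' hi' j' hj'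
            · intro l' hl' hne i' hi'
              by_cases h : l' = l
              · subst h
                rw [updW_snd]
                exact HbB l' hl' i' hi'
              · rw [updW_ne _ _ _ _ _ _ h]
                exact HbB l' hl' i' hi'
            · intro x i' hi''
              rw [updW_ne _ _ _ _ _ _ (by omega : l + 1 ≠ l), nullEmb_col m l 0 θ i',
                HbB (l+1) (by omega) i' hi'']
              ring
          rw [funext hfun]
          exact deriv_const _ _
        · -- Case A : old weight coordinate
          have hi' : i < m (l+1) := by
            by_cases h : l = p
            · subst h
              have hh : widen m l (l+1) = m (l+1) + 1 := if_pos rfl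
              rw [hh] at hi
              rcases Nat.lt_succ_iff_lt_or_eq.mp hi with h' | h'
              · exact h'
              · exact absurd ⟨rfl, h'⟩ hB
            · have hh : widen m p (l+1) = m (l+1) := if_neg (by omega)
              rwa [hh] at hi
          have hj' : j < m l := by
            by_cases h : l = p + 1
            · subst h
              have hh : widen m p (p+1) = m (p+1) + 1 := if_pos rfl
              rw [hh] at hj
              rcases Nat.lt_succ_iff_lt_or_eq.mp hj with h' | h'
              · exact h'
              · exact absurd ⟨rfl, h'⟩ hC
            · have hh : widen m p l = m l := if_neg h
              rwa [hh] at hj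
          have hfun : ∀ t, risk σ (widen m p) K loss X Y
                (updW (nullEmb m p 0 θ) l i j t)
              = risk σ m K loss X Y (updW θ l i j t) := by
            intro t
            apply risk_key σ K m p hp loss X Y
            · intro l' hl' i' hi'' j' hj''
              by_cases h : l' = l
              · subst h
                rw [updW_fst, updW_fst]
                by_cases hij : i' = i ∧ j' = j
                · rw [if_pos hij, if_pos hij]
                · rw [if_neg hij, if_neg hij]
                  exact HwB l' hl' i' hi'' j' hj''
              · rw [updW_ne _ _ _ _ _ _ h, updW_ne _ _ _ _ _ _ h]
                exact HwB l' hl' i' hi'' j' hj''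
            · intro l' hl' hne i' hi''
              by_cases h : l' = l
              · subst h
                rw [updW_snd, updW_snd]
                exact HbB l' hl' i' hi''
              · rw [updW_ne _ _ _ _ _ _ h, updW_ne _ _ _ _ _ _ h]
                exact HbB l' hl' i' hi''
            · intro x i' hi''
              have hw0 : (updW (nullEmb m p 0 θ) l i j t (p+1)).1 i' (m (p+1)) = 0 := by
                by_cases h : p + 1 = l
                · subst h
                  rw [updW_fst, if_neg (by rintro ⟨_, rfl⟩; exact hC ⟨rfl, rfl⟩)]
                  exact nullEmb_col m p 0 θ i'
                · rw [updW_ne _ _ _ _ _ _ h]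
                  exact nullEmb_col m p 0 θ i'
              have hb2 : (updW (nullEmb m p 0 θ) l i j t (p+1)).2 i' = (θ (p+1)).2 i' := by
                by_cases h : p + 1 = l
                · subst h
                  rw [updW_snd]
                  exact HbB (p+1) (by omega) i' hi''
                · rw [updW_ne _ _ _ _ _ _ h]
                  exact HbB (p+1) (by omega) i' hi''
              have hb1 : (updW θ l i j t (p+1)).2 i' = (θ (p+1)).2 i' := by
                by_cases h : p + 1 = l
                · subst h; rw [updW_snd]
                · rw [updW_ne _ _ _ _ _ _ h]
              rw [hw0, hb1, hb2]
              ring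
          have hpt : ((nullEmb m p 0 θ) l).1 i j = (θ l).1 i j :=
            nullEmb_w_eq m p 0 θ l i j (fun h h2 => hB ⟨h, h2⟩) (fun h h2 => hC ⟨h, h2⟩)
          rw [funext hfun, hpt]
          exact hc.1 l hl i hi' j hj'
    · -- bias coordinates
      intro l hl i hi
      by_cases hB : l = p ∧ i = m (p+1)
      · obtain ⟨h1, h2⟩ := hB
        subst h1
        subst h2
        have hfun : ∀ t, risk σ (widen m l) K loss X Y (updB (nullEmb m l 0 θ) l (m (l+1)) t)
            = risk σ m K loss X Y θ := by
          intro t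
          apply risk_key σ K m l hp loss X Y
          · intro l' hl' i' hi' j' hj'
            by_cases h : l' = l
            · subst h
              rw [updB_fst]
              exact HwB l' hl' i' hi' j' hj'
            · rw [updB_ne _ _ _ _ _ h]
              exact HwB l' hl' i' hi' j' hj'
          · intro l' hl' hne i' hi'
            by_cases h : l' = l
            · subst h
              rw [updB_snd, if_neg (by omega)]
              exact HbB l' hl' i' hi'
            · rw [updB_ne _ _ _ _ _ h]
              exact HbB l' hl' i' hi'
          · intro x i' hi''
            rw [updB_ne _ _ _ _ _ (by omega : l + 1 ≠ l), nullEmb_col m l 0 θ i',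
              HbB (l+1) (by omega) i' hi'']
            ring
        rw [funext hfun]
        exact deriv_const _ _
      · have hi' : i < m (l+1) := by
          by_cases h : l = p
          · subst h
            have hh : widen m l (l+1) = m (l+1) + 1 := if_pos rfl
            rw [hh] at hi
            rcases Nat.lt_succ_iff_lt_or_eq.mp hi with h' | h'
            · exact h'
            · exact absurd ⟨rfl, h'⟩ hB
          · have hh : widen m p (l+1) = m (l+1) := if_neg (by omega)
            rwa [hh] at hi
        have hfun : ∀ t, risk σ (widen m p) K loss X Y (updB (nullEmb m p 0 θ) l i t)
            = risk σ m K loss X Y (updB θ l i t) := by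
          intro t
          apply risk_key σ K m p hp loss X Y
          · intro l' hl' i' hi'' j' hj''
            by_cases h : l' = l
            · subst h
              rw [updB_fst, updB_fst]
              exact HwB l' hl' i' hi'' j' hj''
            · rw [updB_ne _ _ _ _ _ h, updB_ne _ _ _ _ _ h]
              exact HwB l' hl' i' hi'' j' hj''
          · intro l' hl' hne i' hi''
            by_cases h : l' = l
            · subst h
              rw [updB_snd, updB_snd]
              by_cases hii : i' = i
              · rw [if_pos hii, if_pos hii]
              · rw [if_neg hii, if_neg hii]
                exact HbB l' hl' i' hi''
            · rw [updB_ne _ _ _ _ _ h, updB_ne _ _ _ _ _ h]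
              exact HbB l' hl' i' hi''
          · intro x i' hi''
            have hw0 : (updB (nullEmb m p 0 θ) l i t (p+1)).1 i' (m (p+1)) = 0 := by
              by_cases h : p + 1 = l
              · subst h
                rw [updB_fst]
                exact nullEmb_col m p 0 θ i'
              · rw [updB_ne _ _ _ _ _ h]
                exact nullEmb_col m p 0 θ i'
            have hb2 : (updB (nullEmb m p 0 θ) l i t (p+1)).2 i'
                = (updB θ l i t (p+1)).2 i' := by
              by_cases h : p + 1 = l
              · subst h
                rw [updB_snd, updB_snd]
                by_cases hii : i' = i
                · rw [if_pos hii, if_pos hii]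
                · rw [if_neg hii, if_neg hii]
                  exact HbB (p+1) (by omega) i' hi''
              · rw [updB_ne _ _ _ _ _ h, updB_ne _ _ _ _ _ h]
                exact HbB (p+1) (by omega) i' hi''
            rw [hw0, hb2]
            ring
        have hpt : ((nullEmb m p 0 θ) l).2 i = (θ l).2 i :=
          nullEmb_b_eq m p 0 θ l i (fun h h2 => hB ⟨h, h2⟩)
        rw [funext hfun, hpt]
        exact hc.2 l hl i hi'
  · -- output equality
    intro x
    apply truncOut_key σ K m p hp _ θ x
    apply preact_key σ K m p hp _ θ x HwB
    · intro l hl _ i hi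
      exact HbB l hl i hi
    · intro i hi
      rw [nullEmb_col m p 0 θ i, HbB (p+1) (by omega) i hi]
      ring


/- congruence in the width function -/
lemma feat_congr (σ : ℝ → ℝ) (m₁ m₂ : ℕ → ℕ) (θ : NNParams) (x : ℕ → ℝ) :
    ∀ l, (∀ t, t < l → m₁ t = m₂ t) → ∀ i, feat σ m₁ θ x l i = feat σ m₂ θ x l i := by
  intro l
  induction l with
  | zero => intro _ i; rfl
  | succ l ih =>
    intro h i
    show σ _ = σ _
    congr 1
    rw [h l (by omega)]
    congr 1
    apply Finset.sum_congr rfl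
    intro j _
    rw [ih (fun t ht => h t (by omega)) j]

lemma preact_congr (σ : ℝ → ℝ) (m₁ m₂ : ℕ → ℕ) (θ : NNParams) (x : ℕ → ℝ) (l : ℕ)
    (h : ∀ t, t ≤ l → m₁ t = m₂ t) (i : ℕ) :
    preact σ m₁ θ x l i = preact σ m₂ θ x l i := by
  unfold preact
  rw [h l le_rfl]
  congr 1
  apply Finset.sum_congr rfl
  intro j _
  rw [feat_congr σ m₁ m₂ θ x l (fun t ht => h t (by omega)) j]

lemma truncOut_congr (σ : ℝ → ℝ) (m₁ m₂ : ℕ → ℕ) (K : ℕ) (θ : NNParams) (x : ℕ → ℝ)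
    (h : ∀ t, t ≤ K + 1 → m₁ t = m₂ t) :
    truncOut σ m₁ K θ x = truncOut σ m₂ K θ x := by
  funext i
  unfold truncOut nnOut
  rw [h (K+1) le_rfl]
  split_ifs with hi
  · exact preact_congr σ m₁ m₂ θ x K (fun t ht => h t (by omega)) i
  · rfl

lemma risk_congr (σ : ℝ → ℝ) (m₁ m₂ : ℕ → ℕ) (K : ℕ)
    (loss : (ℕ → ℝ) → (ℕ → ℝ) → ℝ) {n : ℕ} (X Y : Fin n → ℕ → ℝ) (θ : NNParams)
    (h : ∀ t, t ≤ K + 1 → m₁ t = m₂ t) :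
    risk σ m₁ K loss X Y θ = risk σ m₂ K loss X Y θ := by
  unfold risk
  congr 1
  apply Finset.sum_congr rfl
  intro a _
  rw [truncOut_congr σ m₁ m₂ K θ (X a) h]

lemma isCritical_congr (K : ℕ) (m₁ m₂ : ℕ → ℕ) (R₁ R₂ : NNParams → ℝ)
    (hm : ∀ t, t ≤ K + 1 → m₁ t = m₂ t) (hR : ∀ θ', R₁ θ' = R₂ θ') (θ : NNParams)
    (hc : IsCritical R₁ m₁ K θ) : IsCritical R₂ m₂ K θ := by
  constructor
  · intro l hl i hi j hj
    have e : (fun t => R₂ (updW θ l i j t)) = (fun t => R₁ (updW θ l i j t)) :=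
      funext fun t => (hR _).symm
    rw [e]
    exact hc.1 l hl i (by rw [hm (l+1) (by omega)]; exact hi) j
      (by rw [hm l (by omega)]; exact hj)
  · intro l hl i hi
    have e : (fun t => R₂ (updB θ l i t)) = (fun t => R₁ (updB θ l i t)) :=
      funext fun t => (hR _).symm
    rw [e]
    exact hc.2 l hl i (by rw [hm (l+1) (by omega)]; exact hi)

/- multi-step lemma -/
lemma multi_main (σ : ℝ → ℝ) (K : ℕ) (loss : (ℕ → ℝ) → (ℕ → ℝ) → ℝ)
    {n : ℕ} (X Y : Fin n → ℕ → ℝ) :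
    ∀ (steps : List EmbStep), (∀ st ∈ steps, st.1 < K ∧ st.2.1 = none ∧ st.2.2 = 0) →
    ∀ (m : ℕ → ℕ) (θ : NNParams), IsCritical (risk σ m K loss X Y) m K θ →
      IsCritical (risk σ (multiWidth m steps) K loss X Y) (multiWidth m steps) K
        (multiEmb m steps θ) ∧
      (∀ x, truncOut σ (multiWidth m steps) K (multiEmb m steps θ) x
        = truncOut σ m K θ x) := by
  intro steps
  induction steps with
  | nil => exact fun _ m θ hc => ⟨hc, fun x => rfl⟩
  | cons st rest ih =>
    intro hval m θ hc
    obtain ⟨hlt, hnone, hzero⟩ := hval st (List.mem_cons_self)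
    have hemb : stepEmb m st θ = nullEmb m st.1 0 θ := by
      unfold stepEmb
      rw [hnone, ← hzero]
    have hstep := step_main σ K m st.1 hlt loss X Y θ hc
    have ih' := ih (fun s hs => hval s (List.mem_cons_of_mem _ hs)) (widen m st.1)
      (stepEmb m st θ) (by rw [hemb]; exact hstep.1)
    exact ⟨ih'.1, fun x => (ih'.2 x).trans (by rw [hemb]; exact hstep.2 x)⟩

lemma validSteps_null (K : ℕ) :
    ∀ (steps : List EmbStep) (m : ℕ → ℕ),
      (∀ st ∈ steps, st.1 < K ∧ st.2.1 = none) → ValidSteps K m steps := by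
  intro steps
  induction steps with
  | nil => intro m _; trivial
  | cons st rest ih =>
    intro m h
    refine ⟨(h st (List.mem_cons_self)).1, ?_,
      ih (widen m st.1) (fun s hs => h s (List.mem_cons_of_mem _ hs))⟩
    intro s hs
    rw [(h st (List.mem_cons_self)).2] at hs
    cases hs

/- construction of the step list -/
def build (m m' : ℕ → ℕ) : ℕ → List EmbStep
  | 0 => []
  | k+1 => build m m' k ++ List.replicate (m' (k+1) - m (k+1)) ((k, none, 0) : EmbStep)

lemma build_mem (m m' : ℕ → ℕ) :
    ∀ k st, st ∈ build m m' k → st.1 < k ∧ st.2.1 = none ∧ st.2.2 = 0 := by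
  intro k
  induction k with
  | zero => intro st h; simp [build] at h
  | succ k ih =>
    intro st h
    rw [show build m m' (k+1)
        = build m m' k ++ List.replicate (m' (k+1) - m (k+1)) ((k, none, 0) : EmbStep)
      from rfl, List.mem_append] at h
    rcases h with h | h
    · have := ih st h
      exact ⟨by omega, this.2⟩
    · have := List.eq_of_mem_replicate h
      subst this
      exact ⟨Nat.lt_succ_self k, rfl, rfl⟩

lemma multiWidth_append :
    ∀ (s₁ s₂ : List EmbStep) (m : ℕ → ℕ),
      multiWidth m (s₁ ++ s₂) = multiWidth (multiWidth m s₁) s₂ := by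
  intro s₁
  induction s₁ with
  | nil => intro s₂ m; rfl
  | cons st rest ih => intro s₂ m; exact ih s₂ (widen m st.1)

lemma multiWidth_replicate (p : ℕ) :
    ∀ (kk : ℕ) (m : ℕ → ℕ) (l : ℕ),
      multiWidth m (List.replicate kk ((p, none, 0) : EmbStep)) l
        = if l = p + 1 then m l + kk else m l := by
  intro kk
  induction kk with
  | zero => intro m l; simp [multiWidth]
  | succ kk ih =>
    intro m l
    rw [show List.replicate (kk+1) ((p, none, 0) : EmbStep)
        = ((p, none, 0) : EmbStep) :: List.replicate kk ((p, none, 0) : EmbStep) from rfl]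
    rw [show multiWidth m (((p, none, 0) : EmbStep) :: List.replicate kk ((p, none, 0) : EmbStep))
        = multiWidth (widen m p) (List.replicate kk ((p, none, 0) : EmbStep)) from rfl]
    rw [ih (widen m p) l]
    unfold widen
    split_ifs with h
    · subst h; omega
    · rfl

lemma build_width (m m' : ℕ → ℕ) (K : ℕ) (hle : ∀ l, 1 ≤ l → l ≤ K → m l ≤ m' l) :
    ∀ k, k ≤ K → ∀ l, multiWidth m (build m m' k) l = if 1 ≤ l ∧ l ≤ k then m' l else m l := by
  intro k
  induction k with
  | zero => intro _ l; rw [if_neg (by omega)]; rfl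
  | succ k ih =>
    intro hk l
    rw [show build m m' (k+1)
        = build m m' k ++ List.replicate (m' (k+1) - m (k+1)) ((k, none, 0) : EmbStep)
      from rfl, multiWidth_append, multiWidth_replicate]
    by_cases hl : l = k + 1
    · subst hl
      rw [if_pos rfl, ih (by omega) (k+1), if_neg (by omega), if_pos (by omega)]
      have := hle (k+1) (by omega) hk
      omega
    · rw [if_neg hl, ih (by omega) l]
      split_ifs with h1 h2 h2
      · rfl
      · omega
      · omega
      · rfl


/-- Embedding Principle: for any `K'`-neuron wider network there is a
composition of one-step embeddings mapping every critical point of the narrow network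
to a critical point of the wider network with the same output function. -/
theorem embedding_principle
    (K : ℕ) (hK : 1 ≤ K) (m m' : ℕ → ℕ)
    (h0 : m' 0 = m 0) (hLtop : m' (K + 1) = m (K + 1))
    (hle : ∀ l, 1 ≤ l → l ≤ K → m l ≤ m' l) :
    ∃ steps : List EmbStep,
      ValidSteps K m steps ∧
      (∀ l, l ≤ K + 1 → multiWidth m steps l = m' l) ∧
      ∀ (σ : ℝ → ℝ), Differentiable ℝ σ →
      ∀ loss : (ℕ → ℝ) → (ℕ → ℝ) → ℝ, LossDiff loss →
      ∀ (n : ℕ) (X Y : Fin n → ℕ → ℝ) (θc : NNParams),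
        IsCritical (risk σ m K loss X Y) m K θc →
        IsCritical (risk σ m' K loss X Y) m' K (multiEmb m steps θc) ∧
        ∀ (x : ℕ → ℝ) (i : ℕ), i < m (K + 1) →
          nnOut σ m' K (multiEmb m steps θc) x i = nnOut σ m K θc x i := by
  have hmw : ∀ l, l ≤ K + 1 → multiWidth m (build m m' K) l = m' l := by
    intro l hl
    rw [build_width m m' K hle K le_rfl l]
    split_ifs with h
    · rfl
    · have : l = 0 ∨ l = K + 1 := by omega
      rcases this with rfl | rfl
      · exact h0.symm
      · exact hLtop.symm
  refine ⟨build m m' K, ?_, hmw, ?_⟩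
  · apply validSteps_null
    intro st hst
    have := build_mem m m' K st hst
    exact ⟨this.1, this.2.1⟩
  · intro σ hσ loss hloss n X Y θc hc
    obtain ⟨hcrit, hout⟩ :=
      multi_main σ K loss X Y (build m m' K) (build_mem m m' K) m θc hc
    constructor
    · exact isCritical_congr K (multiWidth m (build m m' K)) m'
        (risk σ (multiWidth m (build m m' K)) K loss X Y) (risk σ m' K loss X Y)
        hmw
        (fun θ' => risk_congr σ (multiWidth m (build m m' K)) m' K loss X Y θ' hmw)
        (multiEmb m (build m m' K) θc) hcrit
    · intro x i hiK
      have h1 : nnOut σ m' K (multiEmb m (build m m' K) θc) x i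
          = nnOut σ (multiWidth m (build m m' K)) K (multiEmb m (build m m' K) θc) x i := by
        unfold nnOut
        exact (preact_congr σ (multiWidth m (build m m' K)) m'
          (multiEmb m (build m m' K) θc) x K (fun t ht => hmw t (by omega)) i).symm
      have h2 := congrFun (hout x) i
      unfold truncOut at h2
      rw [if_pos (by rw [hmw (K+1) le_rfl, hLtop]; exact hiK), if_pos hiK] at h2
      rw [h1, h2]

end EmbeddingPrinciple
end
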